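/- Let G be a balanced bipartite graph with parts S and T of equal size m ≥ 2. Suppose every vertex of S has more than m/2 + 1 neighbors in T and every vertex of T has more than m/2 + 1 neighbors in S. Then for every x ∈ S and y ∈ T, G contains a Hamiltonian path with endpoints x and y. -/

import Mathlib

open List Finset
set_option linter.unusedSectionVars false
set_option maxHeartbeats 1000000

variable {V : Type} [Fintype V] [DecidableEq V]

lemma exists_walk_of_chain' (G : SimpleGraph V) :
    ∀ (l : List V) (a b : V), l.Chain' G.Adj → l.head? = some a → l.getLast? = some b →
      ∃ p : G.Walk a b, p.support = l := by
  intro l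
  induction l with
  | nil => intro a b _ h; simp at h
  | cons c l ih =>
    intro a b hc ha hb
    simp at ha; subst ha
    cases l with
    | nil =>
      simp at hb; subst hb
      exact ⟨SimpleGraph.Walk.nil, rfl⟩
    | cons d l' =>
      rw [List.Chain', List.isChain_cons_cons] at hc
      have hb' : (d :: l').getLast? = some b := by
        rwa [List.getLast?_cons_cons] at hb
      obtain ⟨p, hp⟩ := ih d b hc.2 rfl hb'
      exact ⟨SimpleGraph.Walk.cons hc.1 p, by simp [hp]⟩

lemma card_filter_get (l : List V) (hl : l.Nodup) (P : V → Prop) [DecidablePred P] :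
    (Finset.univ.filter fun i : Fin l.length => P (l.get i)).card
      = (l.toFinset.filter P).card := by
  apply Finset.card_bij (fun i _ => l.get i)
  · intro i hi
    simp only [Finset.mem_filter, Finset.mem_univ, true_and] at hi ⊢
    exact ⟨List.mem_toFinset.2 (l.get_mem _), hi⟩
  · intro i hi j hj hij
    exact List.nodup_iff_injective_get.1 hl hij
  · intro v hv
    simp only [Finset.mem_filter, List.mem_toFinset] at hv
    obtain ⟨i, hi⟩ := List.mem_iff_get.1 hv.1
    exact ⟨i, by simp only [Finset.mem_filter, Finset.mem_univ, true_and]; rw [hi]; exact hv.2, hi⟩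

lemma flip_adj (G : SimpleGraph V) : (fun a b => G.Adj b a) = G.Adj := by
  ext u v; exact ⟨fun h => h.symm, fun h => h.symm⟩

lemma take_getLast? (l : List V) (i : ℕ) (h : i < l.length) :
    (l.take (i+1)).getLast? = some (l.get ⟨i, h⟩) := by
  rw [List.getLast?_eq_getElem?]
  simp [List.length_take, Nat.min_eq_left (by omega : i+1 ≤ l.length),
    List.getElem?_take_of_lt (by omega : i < i+1), List.getElem?_eq_getElem h]

lemma drop_head? (l : List V) (i : ℕ) (h : i < l.length) :
    (l.drop i).head? = some (l.get ⟨i, h⟩) := by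
  simp [List.head?_drop, List.getElem?_eq_getElem h]

lemma drop_getLast? (l : List V) (i : ℕ) (h : i < l.length) :
    (l.drop i).getLast? = some (l.get ⟨l.length - 1, by omega⟩) := by
  rw [List.getLast?_eq_getElem?]
  simp only [List.length_drop, List.getElem?_drop]
  have : i + (l.length - i - 1) = l.length - 1 := by omega
  rw [this, List.getElem?_eq_getElem (by omega)]
  simp

lemma head?_eq_get (l : List V) (h : 0 < l.length) : l.head? = some (l.get ⟨0, h⟩) := by
  cases l with
  | nil => simp at h
  | cons a t => rfl

/-- A "path list" : nonempty simple path in `G` staying inside `W`. -/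
def IsPathList (G : SimpleGraph V) (W : Finset V) (l : List V) : Prop :=
  l ≠ [] ∧ l.Chain' G.Adj ∧ l.Nodup ∧ ∀ v ∈ l, v ∈ W

lemma ext_lemma (G : SimpleGraph V) [DecidableRel G.Adj] (W A B : Finset V) (n : ℕ)
    (hA : A.card = n) (hB : B.card = n)
    (hW : ∀ v, v ∈ W ↔ v ∈ A ∨ v ∈ B)
    (hcA : ∀ u v, G.Adj u v → u ∈ A → v ∉ A)
    (hcB : ∀ u v, G.Adj u v → u ∈ B → v ∉ B)
    (hdB : ∀ b ∈ B, n + 2 ≤ 2 * (A.filter (fun u => G.Adj b u)).card)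
    (hdA : ∀ a ∈ A, n + 2 ≤ 2 * (B.filter (fun u => G.Adj a u)).card)
    (ℓ : List V) (hD : IsPathList G W ℓ)
    (hmax : ∀ l, IsPathList G W l → l.length ≤ ℓ.length)
    (hL : 0 < ℓ.length) (hhead : ℓ.get ⟨0, hL⟩ ∈ A)
    (v : V) (hvB : v ∈ B) (hvl : v ∉ ℓ) : False := by
  classical
  obtain ⟨-, hchain, hnodup, hmem⟩ := hD
  set L := ℓ.length with hLdef
  -- step 1 : no vertex of B off ℓ is adjacent to the head of ℓ
  have hext1 : ∀ z ∈ B, z ∉ ℓ → ¬ G.Adj z (ℓ.get ⟨0, hL⟩) := by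
    intro z hz hzl hadj
    have hnew : IsPathList G W (z :: ℓ) := by
      refine ⟨List.cons_ne_nil _ _, ?_, ?_, ?_⟩
      · rw [List.Chain', List.isChain_cons]
        refine ⟨?_, hchain⟩
        intro b hb
        rw [head?_eq_get ℓ hL] at hb
        simp at hb; subst hb; exact hadj
      · exact List.nodup_cons.2 ⟨hzl, hnodup⟩
      · intro u hu
        rcases List.mem_cons.1 hu with h | h
        · subst h; exact (hW u).2 (Or.inr hz)
        · exact hmem u h
    have := hmax _ hnew
    simp [List.length_cons] at this
    omega
  -- step 2 : no vertex of B off ℓ is adjacent to the last of ℓ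
  have hext2 : ∀ z ∈ B, z ∉ ℓ → ¬ G.Adj z (ℓ.get ⟨L - 1, by omega⟩) := by
    intro z hz hzl hadj
    have hnew : IsPathList G W (ℓ ++ [z]) := by
      refine ⟨by simp, ?_, ?_, ?_⟩
      · rw [List.Chain', List.isChain_append]
        refine ⟨hchain, List.isChain_singleton _, ?_⟩
        intro a ha b hb
        rw [List.getLast?_eq_getElem?, List.getElem?_eq_getElem (by omega : L - 1 < L)] at ha
        simp at ha hb; subst ha; subst hb
        exact hadj.symm
      · rw [List.nodup_append]
        refine ⟨hnodup, List.nodup_singleton _, ?_⟩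
        intro a ha b hb hab
        simp at hb; subst hab; subst hb; exact hzl ha
      · intro u hu
        rcases List.mem_append.1 hu with h | h
        · exact hmem u h
        · simp at h; subst h; exact (hW u).2 (Or.inr hz)
    have := hmax _ hnew
    simp at this
    omega
  -- counting
  set h₀ := ℓ.get ⟨0, hL⟩ with hh₀
  set K : Finset (Fin L) := univ.filter (fun i => ℓ.get i ∈ A) with hK
  set I : Finset (Fin L) := univ.filter (fun i => G.Adj v (ℓ.get i)) with hI
  set J : Finset (Fin L) := univ.filter
    (fun i => ∃ h : (i:ℕ)+1 < L, G.Adj h₀ (ℓ.get ⟨(i:ℕ)+1, h⟩)) with hJ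
  set N : Finset V := A.filter (fun u => G.Adj v u) with hNdef
  set N₀ : Finset V := B.filter (fun u => G.Adj h₀ u) with hN₀def
  have hN : n + 2 ≤ 2 * N.card := hdB v hvB
  have hN₀ : n + 2 ≤ 2 * N₀.card := hdA h₀ hhead
  have hmemW : ∀ i : Fin L, ℓ.get i ∈ W := fun i => hmem _ (ℓ.get_mem _)
  have hKA : K.card = (A ∩ ℓ.toFinset).card := by
    rw [hK, card_filter_get ℓ hnodup (· ∈ A), Finset.filter_mem_eq_inter, Finset.inter_comm]
  have hKn : (A ∩ ℓ.toFinset).card ≤ n := by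
    rw [← hA]; exact Finset.card_le_card (Finset.inter_subset_left)
  have hIcard : I.card = (ℓ.toFinset ∩ N).card := by
    rw [hI, card_filter_get ℓ hnodup (fun u => G.Adj v u)]
    congr 1
    ext u
    simp only [Finset.mem_filter, Finset.mem_inter, List.mem_toFinset, hNdef]
    constructor
    · rintro ⟨hu, hadj⟩
      refine ⟨hu, ?_, hadj⟩
      rcases (hW u).1 (hmem u hu) with h | h
      · exact h
      · exact absurd h (hcB v u hadj hvB)
    · rintro ⟨hu, -, hadj⟩; exact ⟨hu, hadj⟩
  have hNsplit : N.card ≤ (ℓ.toFinset ∩ N).card + (A \ ℓ.toFinset).card := by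
    refine le_trans (Finset.card_le_card ?_) (Finset.card_union_le _ _)
    intro u hu
    rcases Finset.mem_filter.1 hu with ⟨huA, hadj⟩
    by_cases h : u ∈ ℓ.toFinset
    · exact Finset.mem_union_left _ (Finset.mem_inter.2 ⟨h, hu⟩)
    · exact Finset.mem_union_right _ (Finset.mem_sdiff.2 ⟨huA, h⟩)
  have hAsplit : (A \ ℓ.toFinset).card + (A ∩ ℓ.toFinset).card = n := by
    rw [Finset.card_sdiff_add_card_inter, hA]
  -- J counting
  have hJ'eq : (univ.filter (fun j : Fin L => G.Adj h₀ (ℓ.get j))).card = N₀.card := by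
    rw [card_filter_get ℓ hnodup (fun u => G.Adj h₀ u)]
    congr 1
    ext u
    simp only [Finset.mem_filter, List.mem_toFinset, hN₀def]
    constructor
    · rintro ⟨hu, hadj⟩
      refine ⟨?_, hadj⟩
      rcases (hW u).1 (hmem u hu) with h | h
      · exact absurd h (hcA h₀ u hadj hhead)
      · exact h
    · rintro ⟨huB, hadj⟩
      refine ⟨?_, hadj⟩
      by_contra hul
      exact hext1 u huB hul hadj.symm
  have hne0 : ∀ j : Fin L, G.Adj h₀ (ℓ.get j) → 1 ≤ (j:ℕ) := by
    intro j hadj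
    by_contra h
    have hj0 : j = ⟨0, hL⟩ := Fin.ext (by first | omega | (simp only [Fin.val_mk]; omega))
    rw [hj0] at hadj
    exact G.irrefl hadj
  have hJcard : N₀.card ≤ J.card := by
    rw [← hJ'eq]
    apply Finset.card_le_card_of_injOn (fun j => ⟨(j:ℕ) - 1, by omega⟩)
    · intro j hj
      have hadj := (Finset.mem_filter.1 hj).2
      have h1 := hne0 j hadj
      have hlt : (j:ℕ) - 1 + 1 < L := by omega
      show (⟨(j:ℕ) - 1, by omega⟩ : Fin L) ∈ J
      rw [hJ, Finset.mem_filter]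
      refine ⟨Finset.mem_univ _, hlt, ?_⟩
      have heq : (⟨(j:ℕ) - 1 + 1, hlt⟩ : Fin L) = j := Fin.ext (by first | omega | (simp only [Fin.val_mk]; omega))
      rw [heq]
      exact hadj
    · intro a ha b hb hab
      have h1 := hne0 a (Finset.mem_filter.1 ha).2
      have h2 := hne0 b (Finset.mem_filter.1 hb).2
      have hv' : ((a:ℕ) - 1) = ((b:ℕ) - 1) := congrArg Fin.val hab
      exact Fin.ext (by omega)
  -- I, J ⊆ K
  have hIK : I ⊆ K := by
    intro i hi
    simp only [hI, hK, Finset.mem_filter, Finset.mem_univ, true_and] at hi ⊢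
    rcases (hW _).1 (hmemW i) with h | h
    · exact h
    · exact absurd h (hcB v _ hi hvB)
  have hJK : J ⊆ K := by
    intro i hi
    simp only [hJ, hK, Finset.mem_filter, Finset.mem_univ, true_and] at hi ⊢
    obtain ⟨h1, hadj⟩ := hi
    have hB1 : ℓ.get ⟨(i:ℕ)+1, h1⟩ ∈ B := by
      rcases (hW _).1 (hmemW ⟨(i:ℕ)+1, h1⟩) with h | h
      · exact absurd h (hcA h₀ _ hadj hhead)
      · exact h
    have hadj2 : G.Adj (ℓ.get i) (ℓ.get ⟨(i:ℕ)+1, h1⟩) := by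
      have hg := List.isChain_iff_getElem.1 hchain (i:ℕ) (by omega)
      convert hg using 2 <;> rfl
    rcases (hW _).1 (hmemW i) with h | h
    · exact h
    · exact absurd h (hcB _ _ hadj2.symm hB1)
  have hIJK : (I ∪ J).card ≤ K.card := Finset.card_le_card (Finset.union_subset hIK hJK)
  have hiu := Finset.card_inter_add_card_union I J
  have hinter : (I ∩ J).Nonempty := by
    rw [← Finset.card_pos]
    omega
  obtain ⟨i, hi⟩ := hinter
  have hiI : G.Adj v (ℓ.get i) := by
    have hm := Finset.mem_inter.1 hi
    simpa [hI] using hm.1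
  obtain ⟨hi1, hadj01⟩ : ∃ h : (i:ℕ)+1 < L, G.Adj h₀ (ℓ.get ⟨(i:ℕ)+1, h⟩) := by
    have hm := Finset.mem_inter.1 hi
    simpa [hJ] using hm.2
  -- construct the longer path
  set newl : List V := (ℓ.drop ((i:ℕ)+1)).reverse ++ (ℓ.take ((i:ℕ)+1) ++ [v]) with hnewl
  have hlen : newl.length = L + 1 := by
    simp only [hnewl, List.length_append, List.length_reverse, List.length_take,
      List.length_drop, List.length_cons, List.length_nil]
    omega
  have hperm : newl.Perm (ℓ ++ [v]) := by
    have p1 : newl.Perm (ℓ.drop ((i:ℕ)+1) ++ (ℓ.take ((i:ℕ)+1) ++ [v])) :=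
      (List.reverse_perm _).append_right _
    have p2 : (ℓ.drop ((i:ℕ)+1) ++ (ℓ.take ((i:ℕ)+1) ++ [v]))
        = (ℓ.drop ((i:ℕ)+1) ++ ℓ.take ((i:ℕ)+1)) ++ [v] := (List.append_assoc _ _ _).symm
    have p3 : ((ℓ.drop ((i:ℕ)+1) ++ ℓ.take ((i:ℕ)+1)) ++ [v]).Perm
        ((ℓ.take ((i:ℕ)+1) ++ ℓ.drop ((i:ℕ)+1)) ++ [v]) :=
      List.perm_append_comm.append_right _
    have p4 : (ℓ.take ((i:ℕ)+1) ++ ℓ.drop ((i:ℕ)+1)) ++ [v] = ℓ ++ [v] := by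
      rw [List.take_append_drop]
    exact ((p1.trans (p2 ▸ List.Perm.refl _)).trans p3).trans (p4 ▸ List.Perm.refl _)
  have hnodupv : (ℓ ++ [v]).Nodup := by
    rw [List.nodup_append]
    refine ⟨hnodup, List.nodup_singleton _, ?_⟩
    intro a ha b hb hab
    simp at hb; subst hab; subst hb; exact hvl ha
  have hchain' : newl.Chain' G.Adj := by
    rw [hnewl, List.Chain', List.isChain_append]
    refine ⟨?_, ?_, ?_⟩
    · rw [List.isChain_reverse, flip_adj]; exact hchain.drop _
    · rw [List.isChain_append]
      refine ⟨hchain.take _, List.isChain_singleton _, ?_⟩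
      intro a ha b hb
      rw [take_getLast? ℓ (i:ℕ) (by omega)] at ha
      simp at ha hb; subst ha; subst hb
      exact hiI.symm
    · intro a ha b hb
      rw [List.getLast?_reverse, drop_head? ℓ ((i:ℕ)+1) hi1] at ha
      simp at ha; subst ha
      have htake : (ℓ.take ((i:ℕ)+1) ++ [v]).head? = some h₀ := by
        have hne : ℓ.take ((i:ℕ)+1) ≠ [] :=
          List.ne_nil_of_length_pos (by rw [List.length_take]; omega)
        rw [List.head?_append_of_ne_nil _ hne, head?_eq_get (ℓ.take ((i:ℕ)+1))
          (by simp [List.length_take]; omega)]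
        congr 1
        rw [hh₀]
        simp
      rw [htake] at hb
      simp at hb; subst hb
      exact hadj01.symm
  have hPL : IsPathList G W newl := by
    refine ⟨by intro hc; rw [hc] at hlen; simp at hlen, hchain', hperm.nodup_iff.2 hnodupv, ?_⟩
    intro u hu
    rcases List.mem_append.1 (hperm.subset hu) with h | h
    · exact hmem u h
    · simp at h; subst h; exact (hW u).2 (Or.inr hvB)
  have := hmax _ hPL
  omega

lemma same_part_contra (G : SimpleGraph V) [DecidableRel G.Adj] (A B : Finset V) (n : ℕ)
    (hA : A.card = n) (hB : B.card = n)
    (hdisj : ∀ v, v ∈ A → v ∉ B)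
    (hcB : ∀ u v, G.Adj u v → u ∈ B → v ∉ B)
    (ℓ : List V) (hchain : ℓ.Chain' G.Adj) (hnodup : ℓ.Nodup)
    (hmem : ∀ v ∈ ℓ, v ∈ A ∨ v ∈ B)
    (hL : 0 < ℓ.length)
    (h0 : ℓ.get ⟨0, hL⟩ ∈ A) (h1 : ℓ.get ⟨ℓ.length - 1, by omega⟩ ∈ A)
    (hBsub : ∀ v ∈ B, v ∈ ℓ) : False := by
  classical
  set L := ℓ.length with hLdef
  set KA : Finset (Fin L) := univ.filter (fun i => ℓ.get i ∈ A) with hKA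
  set KB : Finset (Fin L) := univ.filter (fun i => ℓ.get i ∈ B) with hKB
  have hKAcard : KA.card ≤ n := by
    rw [hKA, card_filter_get ℓ hnodup (· ∈ A)]
    rw [← hA]
    exact Finset.card_le_card (fun u hu => (Finset.mem_filter.1 hu).2)
  have hKBcard : KB.card = n := by
    rw [hKB, card_filter_get ℓ hnodup (· ∈ B), Finset.filter_mem_eq_inter,
      Finset.inter_eq_right.2 (fun v hv => List.mem_toFinset.2 (hBsub v hv)), hB]
  have hlast : (⟨L - 1, by omega⟩ : Fin L) ∈ KA := by
    rw [hKA, Finset.mem_filter]; exact ⟨Finset.mem_univ _, h1⟩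
  have hne0 : ∀ i : Fin L, i ∈ KB → 1 ≤ (i:ℕ) := by
    intro i hi
    rw [hKB, Finset.mem_filter] at hi
    by_contra h
    have : i = ⟨0, hL⟩ := Fin.ext (by first | omega | (simp only [Fin.val_mk]; omega))
    rw [this] at hi
    exact hdisj _ h0 hi.2
  have hinj : KB.card ≤ (KA.erase ⟨L - 1, by omega⟩).card := by
    apply Finset.card_le_card_of_injOn (fun i => ⟨(i:ℕ) - 1, by omega⟩)
    · intro i hi
      have h1i := hne0 i hi
      rw [Finset.mem_coe, hKB, Finset.mem_filter] at hi
      have hlt : (i:ℕ) - 1 < L - 1 := by omega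
      have hadj : G.Adj (ℓ.get ⟨(i:ℕ) - 1, by omega⟩) (ℓ.get i) := by
        have hg := List.isChain_iff_getElem.1 hchain ((i:ℕ) - 1) (by omega)
        convert hg using 2 <;> simp only [List.get_eq_getElem] <;> congr 1 <;> omega
      have hnotB : ℓ.get ⟨(i:ℕ) - 1, by omega⟩ ∉ B := hcB _ _ hadj.symm hi.2
      have hinA : ℓ.get ⟨(i:ℕ) - 1, by omega⟩ ∈ A :=
        ((hmem _ (ℓ.get_mem _)).resolve_right hnotB)
      refine Finset.mem_erase.2 ⟨?_, ?_⟩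
      · intro hc
        have := congrArg Fin.val hc
        simp only [Fin.val_mk] at this
        omega
      · rw [hKA, Finset.mem_filter]; exact ⟨Finset.mem_univ _, hinA⟩
    · intro a ha b hb hab
      have h1a := hne0 a ha
      have h1b := hne0 b hb
      have : ((a:ℕ) - 1) = ((b:ℕ) - 1) := congrArg Fin.val hab
      exact Fin.ext (by omega)
  rw [Finset.card_erase_of_mem hlast] at hinj
  have hKApos : 1 ≤ KA.card := Finset.card_pos.2 ⟨_, hlast⟩
  omega

lemma close_cycle (G : SimpleGraph V) [DecidableRel G.Adj] (A B : Finset V) (n : ℕ)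
    (hA : A.card = n) (hB : B.card = n)
    (hcA : ∀ u v, G.Adj u v → u ∈ A → v ∉ A)
    (hcB : ∀ u v, G.Adj u v → u ∈ B → v ∉ B)
    (hdA : ∀ a ∈ A, n + 2 ≤ 2 * (B.filter (fun u => G.Adj a u)).card)
    (hdB : ∀ b ∈ B, n + 2 ≤ 2 * (A.filter (fun u => G.Adj b u)).card)
    (ℓ : List V) (hchain : ℓ.Chain' G.Adj) (hnodup : ℓ.Nodup)
    (hmem : ∀ v ∈ ℓ, v ∈ A ∨ v ∈ B)
    (hL : 0 < ℓ.length)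
    (h0 : ℓ.get ⟨0, hL⟩ ∈ A) (h1 : ℓ.get ⟨ℓ.length - 1, by omega⟩ ∈ B)
    (hAsub : ∀ v ∈ A, v ∈ ℓ) (hBsub : ∀ v ∈ B, v ∈ ℓ) :
    ∃ c : List V, c.Chain' G.Adj ∧ c.Nodup ∧ c.toFinset = A ∪ B ∧
      ∃ (h : c ≠ []), G.Adj (c.getLast h) (c.head h) := by
  classical
  set L := ℓ.length with hLdef
  set e0 := ℓ.get ⟨0, hL⟩ with he0
  set e1 := ℓ.get ⟨L - 1, by omega⟩ with he1
  set K : Finset (Fin L) := univ.filter (fun i => ℓ.get i ∈ A) with hK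
  set I : Finset (Fin L) := univ.filter (fun i => G.Adj e1 (ℓ.get i)) with hI
  set J : Finset (Fin L) := univ.filter
    (fun i => ∃ h : (i:ℕ)+1 < L, G.Adj e0 (ℓ.get ⟨(i:ℕ)+1, h⟩)) with hJ
  have hKcard : K.card ≤ n := by
    rw [hK, card_filter_get ℓ hnodup (· ∈ A), ← hA]
    exact Finset.card_le_card (fun u hu => (Finset.mem_filter.1 hu).2)
  have hIcard : n + 2 ≤ 2 * I.card := by
    rw [hI, card_filter_get ℓ hnodup (fun u => G.Adj e1 u)]
    have : ℓ.toFinset.filter (fun u => G.Adj e1 u) = A.filter (fun u => G.Adj e1 u) := by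
      ext u
      simp only [Finset.mem_filter, List.mem_toFinset]
      constructor
      · rintro ⟨hu, hadj⟩
        exact ⟨(hmem u hu).resolve_right (hcB e1 u hadj h1), hadj⟩
      · rintro ⟨hu, hadj⟩
        exact ⟨hAsub u hu, hadj⟩
    rw [this]
    exact hdB e1 h1
  have hJ'eq : (univ.filter (fun j : Fin L => G.Adj e0 (ℓ.get j))).card
      = (B.filter (fun u => G.Adj e0 u)).card := by
    rw [card_filter_get ℓ hnodup (fun u => G.Adj e0 u)]
    congr 1
    ext u
    simp only [Finset.mem_filter, List.mem_toFinset]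
    constructor
    · rintro ⟨hu, hadj⟩
      exact ⟨(hmem u hu).resolve_left (hcA e0 u hadj h0), hadj⟩
    · rintro ⟨hu, hadj⟩
      exact ⟨hBsub u hu, hadj⟩
  have hne0 : ∀ j : Fin L, G.Adj e0 (ℓ.get j) → 1 ≤ (j:ℕ) := by
    intro j hadj
    by_contra h
    have hj0 : j = ⟨0, hL⟩ := Fin.ext (by first | omega | (simp only [Fin.val_mk]; omega))
    rw [hj0] at hadj
    exact G.irrefl hadj
  have hJcard : (B.filter (fun u => G.Adj e0 u)).card ≤ J.card := by
    rw [← hJ'eq]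
    apply Finset.card_le_card_of_injOn (fun j => ⟨(j:ℕ) - 1, by omega⟩)
    · intro j hj
      have hadj := (Finset.mem_filter.1 hj).2
      have hj1 := hne0 j hadj
      have hlt : (j:ℕ) - 1 + 1 < L := by omega
      show (⟨(j:ℕ) - 1, by omega⟩ : Fin L) ∈ J
      rw [hJ, Finset.mem_filter]
      refine ⟨Finset.mem_univ _, hlt, ?_⟩
      have heq : (⟨(j:ℕ) - 1 + 1, hlt⟩ : Fin L) = j := Fin.ext (by first | omega | (simp only [Fin.val_mk]; omega))
      rw [heq]
      exact hadj
    · intro a ha b hb hab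
      have h1a := hne0 a (Finset.mem_filter.1 ha).2
      have h1b := hne0 b (Finset.mem_filter.1 hb).2
      have : ((a:ℕ) - 1) = ((b:ℕ) - 1) := congrArg Fin.val hab
      exact Fin.ext (by omega)
  have hJlb : n + 2 ≤ 2 * J.card := by
    have := hdA e0 h0
    omega
  have hIK : I ⊆ K := by
    intro i hi
    simp only [hI, hK, Finset.mem_filter, Finset.mem_univ, true_and] at hi ⊢
    exact (hmem _ (ℓ.get_mem _)).resolve_right (hcB e1 _ hi h1)
  have hJK : J ⊆ K := by
    intro i hi
    simp only [hJ, hK, Finset.mem_filter, Finset.mem_univ, true_and] at hi ⊢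
    obtain ⟨hlt, hadj⟩ := hi
    have hB1 : ℓ.get ⟨(i:ℕ)+1, hlt⟩ ∈ B :=
      (hmem _ (ℓ.get_mem _)).resolve_left (hcA e0 _ hadj h0)
    have hadj2 : G.Adj (ℓ.get i) (ℓ.get ⟨(i:ℕ)+1, hlt⟩) := by
      have hg := List.isChain_iff_getElem.1 hchain (i:ℕ) (by omega)
      convert hg using 2 <;> rfl
    exact (hmem _ (ℓ.get_mem _)).resolve_right (hcB _ _ hadj2.symm hB1)
  have hIJK : (I ∪ J).card ≤ K.card := Finset.card_le_card (Finset.union_subset hIK hJK)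
  have hiu := Finset.card_inter_add_card_union I J
  have hinter : (I ∩ J).Nonempty := by
    rw [← Finset.card_pos]
    omega
  obtain ⟨i, hi⟩ := hinter
  have hiI : G.Adj e1 (ℓ.get i) := by
    have hm := Finset.mem_inter.1 hi
    simpa [hI] using hm.1
  obtain ⟨hi1, hadj01⟩ : ∃ h : (i:ℕ)+1 < L, G.Adj e0 (ℓ.get ⟨(i:ℕ)+1, h⟩) := by
    have hm := Finset.mem_inter.1 hi
    simpa [hJ] using hm.2
  -- construct the cycle
  refine ⟨ℓ.take ((i:ℕ)+1) ++ (ℓ.drop ((i:ℕ)+1)).reverse, ?_, ?_, ?_, ?_⟩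
  · rw [List.Chain', List.isChain_append]
    refine ⟨hchain.take _, by rw [List.isChain_reverse, flip_adj]; exact hchain.drop _, ?_⟩
    intro a ha b hb
    rw [take_getLast? ℓ (i:ℕ) (by omega)] at ha
    rw [List.head?_reverse, drop_getLast? ℓ ((i:ℕ)+1) hi1] at hb
    simp at ha hb; subst ha; subst hb
    exact hiI.symm
  · have hperm : (ℓ.take ((i:ℕ)+1) ++ (ℓ.drop ((i:ℕ)+1)).reverse).Perm ℓ := by
      have p1 : (ℓ.take ((i:ℕ)+1) ++ (ℓ.drop ((i:ℕ)+1)).reverse).Perm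
          (ℓ.take ((i:ℕ)+1) ++ ℓ.drop ((i:ℕ)+1)) :=
        List.Perm.append_left _ (List.reverse_perm _)
      rw [List.take_append_drop] at p1
      exact p1
    exact hperm.nodup_iff.2 hnodup
  · have hperm : (ℓ.take ((i:ℕ)+1) ++ (ℓ.drop ((i:ℕ)+1)).reverse).Perm ℓ := by
      have p1 : (ℓ.take ((i:ℕ)+1) ++ (ℓ.drop ((i:ℕ)+1)).reverse).Perm
          (ℓ.take ((i:ℕ)+1) ++ ℓ.drop ((i:ℕ)+1)) :=
        List.Perm.append_left _ (List.reverse_perm _)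
      rw [List.take_append_drop] at p1
      exact p1
    ext u
    rw [List.mem_toFinset, hperm.mem_iff, Finset.mem_union]
    constructor
    · exact hmem u
    · rintro (h | h)
      · exact hAsub u h
      · exact hBsub u h
  · have hdne : (ℓ.drop ((i:ℕ)+1)).reverse ≠ [] := by
      intro hc
      have := congrArg List.length hc
      simp only [List.length_reverse, List.length_drop, List.length_nil] at this
      omega
    have htne : ℓ.take ((i:ℕ)+1) ≠ [] :=
      List.ne_nil_of_length_pos (by rw [List.length_take]; omega)
    have hcne : ℓ.take ((i:ℕ)+1) ++ (ℓ.drop ((i:ℕ)+1)).reverse ≠ [] := by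
      simp [htne]
    refine ⟨hcne, ?_⟩
    have hlast' : (ℓ.take ((i:ℕ)+1) ++ (ℓ.drop ((i:ℕ)+1)).reverse).getLast? =
        some (ℓ.get ⟨(i:ℕ)+1, hi1⟩) := by
      rw [List.getLast?_append_of_ne_nil _ hdne, List.getLast?_reverse,
        drop_head? ℓ ((i:ℕ)+1) hi1]
    have hhead' : (ℓ.take ((i:ℕ)+1) ++ (ℓ.drop ((i:ℕ)+1)).reverse).head? = some e0 := by
      rw [List.head?_append_of_ne_nil _ htne,
        head?_eq_get (ℓ.take ((i:ℕ)+1)) (by rw [List.length_take]; omega)]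
      congr 1
      rw [he0]
      simp
    have hh : (ℓ.take ((i:ℕ)+1) ++ (ℓ.drop ((i:ℕ)+1)).reverse).head hcne = e0 := by
      have h2 := List.head?_eq_head hcne
      rw [h2] at hhead'
      exact Option.some.inj hhead'
    have hlg : (ℓ.take ((i:ℕ)+1) ++ (ℓ.drop ((i:ℕ)+1)).reverse).getLast hcne
        = ℓ.get ⟨(i:ℕ)+1, hi1⟩ := by
      have h2 := List.getLast?_eq_getLast hcne
      rw [h2] at hlast'
      exact Option.some.inj hlast'
    rw [hh, hlg]
    exact hadj01.symm

lemma core (G : SimpleGraph V) [DecidableRel G.Adj] (A B : Finset V) (n : ℕ)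
    (hA : A.card = n) (hB : B.card = n) (hn : 2 ≤ n)
    (hdisj : ∀ v, v ∈ A → v ∉ B)
    (hcA : ∀ u v, G.Adj u v → u ∈ A → v ∉ A)
    (hcB : ∀ u v, G.Adj u v → u ∈ B → v ∉ B)
    (hdA : ∀ a ∈ A, n + 2 ≤ 2 * (B.filter (fun u => G.Adj a u)).card)
    (hdB : ∀ b ∈ B, n + 2 ≤ 2 * (A.filter (fun u => G.Adj b u)).card) :
    ∃ c : List V, c.Chain' G.Adj ∧ c.Nodup ∧ c.toFinset = A ∪ B ∧
      ∃ (h : c ≠ []), G.Adj (c.getLast h) (c.head h) := by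
  classical
  obtain ⟨W, hWdef⟩ : ∃ W : Finset V, W = A ∪ B := ⟨_, rfl⟩
  have hW : ∀ v, v ∈ W ↔ v ∈ A ∨ v ∈ B := fun v => by rw [hWdef]; exact Finset.mem_union
  have hW' : ∀ v, v ∈ W ↔ v ∈ B ∨ v ∈ A := fun v => by rw [hW, or_comm]
  -- a path list exists
  have hAne : A.Nonempty := by rw [← Finset.card_pos, hA]; omega
  obtain ⟨a₀, ha₀⟩ := hAne
  have hD₀ : IsPathList G W [a₀] := by
    refine ⟨by simp, List.isChain_singleton _, List.nodup_singleton _, ?_⟩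
    intro v hv; simp at hv; subst hv; exact (hW _).2 (Or.inl ha₀)
  -- choose a maximum-length path list
  have hbound : ∀ l, IsPathList G W l → l.length ≤ Fintype.card V := by
    intro l hl
    exact List.Nodup.length_le_card hl.2.2.1
  obtain ⟨ℓ, hD, hmax⟩ : ∃ ℓ, IsPathList G W ℓ ∧
      ∀ l, IsPathList G W l → l.length ≤ ℓ.length := by
    set P : ℕ → Prop := fun k => ∃ l, IsPathList G W l ∧ l.length = k with hP
    have hP1 : P 1 := ⟨[a₀], hD₀, rfl⟩
    have h1card : 1 ≤ Fintype.card V := by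
      have := hbound [a₀] hD₀; simpa using this
    have hspec : P (Nat.findGreatest P (Fintype.card V)) :=
      Nat.findGreatest_spec h1card hP1
    obtain ⟨ℓ, hℓ, hlen⟩ := hspec
    refine ⟨ℓ, hℓ, ?_⟩
    intro l hl
    rw [hlen]
    exact Nat.le_findGreatest (hbound l hl) ⟨l, hl, rfl⟩
  obtain ⟨hne, hchain, hnodup, hmem⟩ := hD
  have hL : 0 < ℓ.length := List.length_pos_iff.2 hne
  have hD' : IsPathList G W ℓ := ⟨hne, hchain, hnodup, hmem⟩
  -- the reversed list is also a maximum path list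
  have hDrev : IsPathList G W ℓ.reverse := by
    refine ⟨by simpa using hne, by rw [List.Chain', List.isChain_reverse, flip_adj]; exact hchain,
      List.nodup_reverse.2 hnodup, ?_⟩
    intro v hv; exact hmem v (List.mem_reverse.1 hv)
  have hmaxrev : ∀ l, IsPathList G W l → l.length ≤ ℓ.reverse.length := by
    intro l hl; rw [List.length_reverse]; exact hmax l hl
  have hLrev : 0 < ℓ.reverse.length := by simpa using hL
  have hrevget : ℓ.reverse.get ⟨0, hLrev⟩ = ℓ.get ⟨ℓ.length - 1, by omega⟩ := by
    have : ℓ.reverse.get ⟨0, hLrev⟩ = ℓ.reverse[0] := rfl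
    rw [this, List.getElem_reverse]
    simp
  -- covering claims
  have hcovA : ℓ.get ⟨0, hL⟩ ∈ A → ∀ v ∈ B, v ∈ ℓ := by
    intro h v hv
    by_contra hvl
    exact ext_lemma G W A B n hA hB hW hcA hcB hdB hdA ℓ hD' hmax hL h v hv hvl
  have hcovB : ℓ.get ⟨0, hL⟩ ∈ B → ∀ v ∈ A, v ∈ ℓ := by
    intro h v hv
    by_contra hvl
    exact ext_lemma G W B A n hB hA hW' hcB hcA hdA hdB ℓ hD' hmax hL h v hv hvl
  have hcovA' : ℓ.get ⟨ℓ.length - 1, by omega⟩ ∈ A → ∀ v ∈ B, v ∈ ℓ := by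
    intro h v hv
    by_contra hvl
    refine ext_lemma G W A B n hA hB hW hcA hcB hdB hdA ℓ.reverse hDrev hmaxrev hLrev
      (by rwa [hrevget]) v hv (by rwa [List.mem_reverse])
  have hcovB' : ℓ.get ⟨ℓ.length - 1, by omega⟩ ∈ B → ∀ v ∈ A, v ∈ ℓ := by
    intro h v hv
    by_contra hvl
    refine ext_lemma G W B A n hB hA hW' hcB hcA hdA hdB ℓ.reverse hDrev hmaxrev hLrev
      (by rwa [hrevget]) v hv (by rwa [List.mem_reverse])
  have hmem' : ∀ v ∈ ℓ, v ∈ A ∨ v ∈ B := fun v hv => (hW v).1 (hmem v hv)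
  -- case analysis on the parts of the two endpoints
  rcases hmem' _ (ℓ.get_mem _) with h0A | h0B
  · rcases hmem' _ (ℓ.get_mem ⟨ℓ.length - 1, by omega⟩) with h1A | h1B
    · exact absurd (same_part_contra G A B n hA hB hdisj hcB ℓ hchain hnodup hmem' hL
        h0A h1A (hcovA h0A)) id
    · exact close_cycle G A B n hA hB hcA hcB hdA hdB ℓ hchain hnodup hmem' hL
        h0A h1B (hcovB' h1B) (hcovA h0A)
  · rcases hmem' _ (ℓ.get_mem ⟨ℓ.length - 1, by omega⟩) with h1A | h1B
    · obtain ⟨c, hc1, hc2, hc3, hc4⟩ := close_cycle G B A n hB hA hcB hcA hdB hdA ℓ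
        hchain hnodup (fun v hv => (hmem' v hv).symm) hL h0B h1A (hcovA' h1A) (hcovB h0B)
      rw [Finset.union_comm] at hc3
      exact ⟨c, hc1, hc2, hc3, hc4⟩
    · exact absurd (same_part_contra G B A n hB hA (fun v hv hv2 => hdisj v hv2 hv) hcA ℓ
        hchain hnodup (fun v hv => (hmem' v hv).symm) hL h0B h1B (hcovB h0B)) id

lemma ham_of_cycle_segment (G : SimpleGraph V) (x y : V) (hxy : x ≠ y)
    (d : List V) (hchain : d.Chain' G.Adj) (hnodup : d.Nodup)
    (hcov : ∀ v, v ∈ d ↔ (v ≠ x ∧ v ≠ y))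
    (u' v' : V) (hh : d.head? = some v') (hl : d.getLast? = some u')
    (hxu : G.Adj x u') (hyv : G.Adj y v') :
    ∃ p : G.Walk x y, p.IsHamiltonian := by
  classical
  have hdne : d ≠ [] := by intro hc; rw [hc] at hh; simp at hh
  have hxd : x ∉ d := fun hc => ((hcov x).1 hc).1 rfl
  have hyd : y ∉ d := fun hc => ((hcov y).1 hc).2 rfl
  set f : List V := x :: (d.reverse ++ [y]) with hf
  have hfchain : f.Chain' G.Adj := by
    rw [hf, List.Chain', List.isChain_cons]
    constructor
    · intro b hb
      rw [List.head?_append_of_ne_nil _ (by simpa using hdne), List.head?_reverse, hl] at hb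
      simp at hb; subst hb
      exact hxu
    · rw [List.isChain_append]
      refine ⟨by rw [List.isChain_reverse, flip_adj]; exact hchain, List.isChain_singleton _, ?_⟩
      intro a ha b hb
      rw [List.getLast?_reverse, hh] at ha
      simp at ha hb; subst ha; subst hb
      exact hyv.symm
  have hfnodup : f.Nodup := by
    rw [hf, List.nodup_cons]
    constructor
    · intro hc
      rcases List.mem_append.1 hc with h | h
      · exact hxd (List.mem_reverse.1 h)
      · simp at h; exact hxy h
    · rw [List.nodup_append]
      refine ⟨List.nodup_reverse.2 hnodup, List.nodup_singleton _, ?_⟩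
      intro a ha b hb hab
      simp at hb; subst hab; subst hb
      exact hyd (List.mem_reverse.1 ha)
  have hfcov : ∀ v, v ∈ f := by
    intro v
    rw [hf]
    by_cases hvx : v = x
    · subst hvx; exact List.mem_cons_self
    · apply List.mem_cons_of_mem
      by_cases hvy : v = y
      · subst hvy; exact List.mem_append.2 (Or.inr (by simp))
      · exact List.mem_append.2 (Or.inl (List.mem_reverse.2 ((hcov v).2 ⟨hvx, hvy⟩)))
  have hfhead : f.head? = some x := rfl
  have hflast : f.getLast? = some y := by
    rw [hf, show x :: (d.reverse ++ [y]) = (x :: d.reverse) ++ [y] by simp]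
    exact List.getLast?_concat
  obtain ⟨p, hp⟩ := exists_walk_of_chain' G f x y hfchain hfhead hflast
  refine ⟨p, ?_⟩
  intro v
  rw [hp]
  exact List.count_eq_one_of_mem hfnodup (hfcov v)

/-- let `G` be a balanced bipartite graph with parts `S` and `T` of equal
size `m ≥ 2`, in which every vertex of `S` has more than `m/2 + 1` neighbors in `T` and
every vertex of `T` has more than `m/2 + 1` neighbors in `S`.  Then for every `x ∈ S`
and `y ∈ T` there is a Hamiltonian path from `x` to `y`. -/
theorem bipartite_hamiltonian_biconnected {V : Type} [Fintype V] [DecidableEq V] (G : SimpleGraph V)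
    (S T : Set V) (m : ℕ)
    (hdisj : Disjoint S T) (hcov : S ∪ T = Set.univ)
    (hS : S.ncard = m) (hT : T.ncard = m) (hm : 2 ≤ m)
    (hbip : ∀ u v : V, G.Adj u v → (u ∈ S ∧ v ∈ T) ∨ (u ∈ T ∧ v ∈ S))
    (hdS : ∀ x ∈ S, (m : ℝ) / 2 + 1 < ((G.neighborSet x ∩ T).ncard : ℝ))
    (hdT : ∀ y ∈ T, (m : ℝ) / 2 + 1 < ((G.neighborSet y ∩ S).ncard : ℝ)) :
    ∀ x ∈ S, ∀ y ∈ T, ∃ p : G.Walk x y, p.IsHamiltonian := by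
  classical
  haveI : DecidableRel G.Adj := Classical.decRel _
  intro x hx y hy
  set Sf := (Set.toFinite S).toFinset with hSfdef
  set Tf := (Set.toFinite T).toFinset with hTfdef
  have hSf : ∀ v, v ∈ Sf ↔ v ∈ S := fun v => Set.Finite.mem_toFinset _
  have hTf : ∀ v, v ∈ Tf ↔ v ∈ T := fun v => Set.Finite.mem_toFinset _
  have hSfcard : Sf.card = m := by rw [← hS, Set.ncard_eq_toFinset_card S]
  have hTfcard : Tf.card = m := by rw [← hT, Set.ncard_eq_toFinset_card T]
  have hST : ∀ v, v ∈ S → v ∉ T := fun v hv => Set.disjoint_left.1 hdisj hv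
  have hTS : ∀ v, v ∈ T → v ∉ S := fun v hv => Set.disjoint_right.1 hdisj hv
  have hSorT : ∀ v : V, v ∈ S ∨ v ∈ T := by
    intro v
    have : v ∈ S ∪ T := by rw [hcov]; trivial
    exact this
  -- degree facts in Finset form
  have hdS' : ∀ u ∈ S, m + 3 ≤ 2 * (Tf.filter (fun w => G.Adj u w)).card := by
    intro u hu
    have hset : ((Tf.filter (fun w => G.Adj u w)) : Set V) = G.neighborSet u ∩ T := by
      ext w
      simp only [Finset.coe_filter, Set.mem_setOf_eq, hTf, Set.mem_inter_iff,
        SimpleGraph.mem_neighborSet]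
      tauto
    have hcardeq : (G.neighborSet u ∩ T).ncard = (Tf.filter (fun w => G.Adj u w)).card := by
      rw [← hset, Set.ncard_coe_finset]
    have h := hdS u hu
    rw [hcardeq] at h
    have h2 : (m : ℝ) + 2 < 2 * ((Tf.filter (fun w => G.Adj u w)).card : ℝ) := by linarith
    have h3 : m + 2 < 2 * (Tf.filter (fun w => G.Adj u w)).card := by exact_mod_cast h2
    omega
  have hdT' : ∀ u ∈ T, m + 3 ≤ 2 * (Sf.filter (fun w => G.Adj u w)).card := by
    intro u hu
    have hset : ((Sf.filter (fun w => G.Adj u w)) : Set V) = G.neighborSet u ∩ S := by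
      ext w
      simp only [Finset.coe_filter, Set.mem_setOf_eq, hSf, Set.mem_inter_iff,
        SimpleGraph.mem_neighborSet]
      tauto
    have hcardeq : (G.neighborSet u ∩ S).ncard = (Sf.filter (fun w => G.Adj u w)).card := by
      rw [← hset, Set.ncard_coe_finset]
    have h := hdT u hu
    rw [hcardeq] at h
    have h2 : (m : ℝ) + 2 < 2 * ((Sf.filter (fun w => G.Adj u w)).card : ℝ) := by linarith
    have h3 : m + 2 < 2 * (Sf.filter (fun w => G.Adj u w)).card := by exact_mod_cast h2
    omega
  have hm3 : 3 ≤ m := by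
    have h1 := hdS' x hx
    have h2 : (Tf.filter (fun w => G.Adj x w)).card ≤ m := by
      rw [← hTfcard]; exact Finset.card_le_card (Finset.filter_subset _ _)
    omega
  set n := m - 1 with hndef
  set A := Sf.erase x with hAdef
  set B := Tf.erase y with hBdef
  have hxSf : x ∈ Sf := (hSf x).2 hx
  have hyTf : y ∈ Tf := (hTf y).2 hy
  have hA : A.card = n := by rw [hAdef, Finset.card_erase_of_mem hxSf, hSfcard]
  have hB : B.card = n := by rw [hBdef, Finset.card_erase_of_mem hyTf, hTfcard]
  have hn : 2 ≤ n := by omega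
  have hAS : ∀ v, v ∈ A → v ∈ S := fun v hv => (hSf v).1 (Finset.mem_of_mem_erase hv)
  have hBT : ∀ v, v ∈ B → v ∈ T := fun v hv => (hTf v).1 (Finset.mem_of_mem_erase hv)
  have hdisjAB : ∀ v, v ∈ A → v ∉ B := fun v hv hv2 => hST v (hAS v hv) (hBT v hv2)
  have hcA : ∀ u v, G.Adj u v → u ∈ A → v ∉ A := by
    intro u v hadj hu hv
    rcases hbip u v hadj with ⟨_, hvT⟩ | ⟨huT, _⟩
    · exact hST v (hAS v hv) hvT
    · exact hST u (hAS u hu) huT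
  have hcB : ∀ u v, G.Adj u v → u ∈ B → v ∉ B := by
    intro u v hadj hu hv
    rcases hbip u v hadj with ⟨huS, _⟩ | ⟨_, hvS⟩
    · exact hST u huS (hBT u hu)
    · exact hST v hvS (hBT v hv)
  -- reduced degree bounds
  have hdSd : ∀ u ∈ S, n + 2 ≤ 2 * (B.filter (fun w => G.Adj u w)).card := by
    intro u hu
    have h1 := hdS' u hu
    have h2 : (B.filter (fun w => G.Adj u w)).card
        = ((Tf.filter (fun w => G.Adj u w)).erase y).card := by
      rw [hBdef, Finset.filter_erase]
    have h3 := Finset.pred_card_le_card_erase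
      (s := Tf.filter (fun w => G.Adj u w)) (a := y)
    omega
  have hdTd : ∀ u ∈ T, n + 2 ≤ 2 * (A.filter (fun w => G.Adj u w)).card := by
    intro u hu
    have h1 := hdT' u hu
    have h2 : (A.filter (fun w => G.Adj u w)).card
        = ((Sf.filter (fun w => G.Adj u w)).erase x).card := by
      rw [hAdef, Finset.filter_erase]
    have h3 := Finset.pred_card_le_card_erase
      (s := Sf.filter (fun w => G.Adj u w)) (a := x)
    omega
  have hdA : ∀ a ∈ A, n + 2 ≤ 2 * (B.filter (fun w => G.Adj a w)).card :=
    fun a ha => hdSd a (hAS a ha)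
  have hdB : ∀ b ∈ B, n + 2 ≤ 2 * (A.filter (fun w => G.Adj b w)).card :=
    fun b hb => hdTd b (hBT b hb)
  -- get the Hamilton cycle of G - {x, y}
  obtain ⟨c, hcchain, hcnodup, hctoF, hcne, hcwrap⟩ :=
    core G A B n hA hB hn hdisjAB hcA hcB hdA hdB
  have hL : 0 < c.length := List.length_pos_iff.2 hcne
  set L := c.length with hLdef
  have hmemc : ∀ v ∈ c, v ∈ A ∨ v ∈ B := by
    intro v hv
    have : v ∈ c.toFinset := List.mem_toFinset.2 hv
    rw [hctoF] at this
    exact Finset.mem_union.1 this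
  have hmemc' : ∀ v, v ∈ A ∨ v ∈ B → v ∈ c := by
    intro v hv
    have : v ∈ c.toFinset := by rw [hctoF]; exact Finset.mem_union.2 hv
    exact List.mem_toFinset.1 this
  have hxy : x ≠ y := fun hc => hST x hx (hc ▸ hy)
  have hxc : x ∉ c := by
    intro hc
    rcases hmemc x hc with h | h
    · exact (Finset.mem_erase.1 h).1 rfl
    · exact hST x hx (hBT x h)
  have hyc : y ∉ c := by
    intro hc
    rcases hmemc y hc with h | h
    · exact hST y (hAS y h) hy
    · exact (Finset.mem_erase.1 h).1 rfl
  -- endpoint-index conversions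
  have hhead0 : c.get ⟨0, hL⟩ = c.head hcne := by
    have h1 := List.head?_eq_head hcne
    rw [head?_eq_get _ hL] at h1
    exact Option.some.inj h1
  have hlastL : c.get ⟨L - 1, by omega⟩ = c.getLast hcne := (List.getLast_eq_getElem hcne).symm
  have hwrap' : G.Adj (c.get ⟨L - 1, by omega⟩) (c.get ⟨0, hL⟩) := by
    rw [hhead0, hlastL]; exact hcwrap
  -- circular successor
  set ws : Fin L → Fin L := fun i =>
    if h : (i : ℕ) + 1 < L then ⟨(i : ℕ) + 1, h⟩ else ⟨0, hL⟩ with hwsdef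
  have hwadj : ∀ i : Fin L, G.Adj (c.get i) (c.get (ws i)) := by
    intro i
    simp only [hwsdef]
    by_cases h : (i : ℕ) + 1 < L
    · rw [dif_pos h]
      have hg := List.isChain_iff_getElem.1 hcchain (i : ℕ) (by omega)
      convert hg using 2 <;> rfl
    · rw [dif_neg h]
      have : i = ⟨L - 1, by omega⟩ := Fin.ext (by first | omega | (simp only [Fin.val_mk]; omega))
      rw [this]
      exact hwrap'
  -- the three index sets
  set KB : Finset (Fin L) := univ.filter (fun i => c.get i ∈ B) with hKB
  set I : Finset (Fin L) := univ.filter (fun i => G.Adj x (c.get i)) with hI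
  set J : Finset (Fin L) := univ.filter (fun i => G.Adj y (c.get (ws i))) with hJ
  have hKBcard : KB.card ≤ n := by
    rw [hKB, card_filter_get c hcnodup (· ∈ B), ← hB]
    exact Finset.card_le_card (fun u hu => (Finset.mem_filter.1 hu).2)
  have hmemT : ∀ u, G.Adj x u → u ∈ c → u ∈ B := by
    intro u hadj hu
    rcases hbip x u hadj with ⟨_, huT⟩ | ⟨hxT, _⟩
    · rcases hmemc u hu with h | h
      · exact absurd (hAS u h) (hTS u huT)
      · exact h
    · exact absurd hxT (hST x hx)
  have hmemS : ∀ u, G.Adj y u → u ∈ c → u ∈ A := by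
    intro u hadj hu
    rcases hbip y u hadj with ⟨hyS, _⟩ | ⟨_, huS⟩
    · exact absurd hyS (hTS y hy)
    · rcases hmemc u hu with h | h
      · exact h
      · exact absurd (hBT u h) (hST u huS)
  have hIcard : n + 2 ≤ 2 * I.card := by
    rw [hI, card_filter_get c hcnodup (fun u => G.Adj x u)]
    have heq : c.toFinset.filter (fun u => G.Adj x u) = B.filter (fun u => G.Adj x u) := by
      ext u
      simp only [Finset.mem_filter, List.mem_toFinset]
      constructor
      · rintro ⟨hu, hadj⟩
        exact ⟨hmemT u hadj hu, hadj⟩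
      · rintro ⟨hu, hadj⟩
        exact ⟨hmemc' u (Or.inr hu), hadj⟩
    rw [heq]
    exact hdSd x hx
  have hJ'card : n + 2 ≤ 2 * (univ.filter (fun j : Fin L => G.Adj y (c.get j))).card := by
    rw [card_filter_get c hcnodup (fun u => G.Adj y u)]
    have heq : c.toFinset.filter (fun u => G.Adj y u) = A.filter (fun u => G.Adj y u) := by
      ext u
      simp only [Finset.mem_filter, List.mem_toFinset]
      constructor
      · rintro ⟨hu, hadj⟩
        exact ⟨hmemS u hadj hu, hadj⟩
      · rintro ⟨hu, hadj⟩
        exact ⟨hmemc' u (Or.inl hu), hadj⟩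
    rw [heq]
    exact hdTd y hy
  -- circular predecessor, to transfer the count
  have hws_surj : ∀ j : Fin L, ∃ i : Fin L, ws i = j := by
    intro j
    by_cases hj : (j : ℕ) = 0
    · refine ⟨⟨L - 1, by omega⟩, ?_⟩
      simp only [hwsdef]
      have : ¬ ((L - 1) + 1 < L) := by omega
      rw [dif_neg (by first | omega | (simp only [Fin.val_mk]; omega))]
      exact Fin.ext (by first | omega | (simp only [Fin.val_mk]; omega))
    · refine ⟨⟨(j : ℕ) - 1, by omega⟩, ?_⟩
      simp only [hwsdef]
      rw [dif_pos (by first | omega | (simp only [Fin.val_mk]; omega))]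
      exact Fin.ext (by first | omega | (simp only [Fin.val_mk]; omega))
  have hJcard : n + 2 ≤ 2 * J.card := by
    refine le_trans hJ'card (by
      have : (univ.filter (fun j : Fin L => G.Adj y (c.get j))).card ≤ J.card := by
        apply Finset.card_le_card_of_injOn (fun j => Classical.choose (hws_surj j))
        · intro j hj
          have hspec := Classical.choose_spec (hws_surj j)
          rw [Finset.mem_coe, Finset.mem_filter]
          refine ⟨Finset.mem_univ _, ?_⟩
          rw [hspec]
          exact (Finset.mem_filter.1 hj).2
        · intro a ha b hb hab
          have hab' : Classical.choose (hws_surj a) = Classical.choose (hws_surj b) := hab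
          have hc := congrArg ws hab'
          rwa [Classical.choose_spec (hws_surj a), Classical.choose_spec (hws_surj b)] at hc
      omega)
  have hIKB : I ⊆ KB := by
    intro i hi
    simp only [hI, hKB, Finset.mem_filter, Finset.mem_univ, true_and] at hi ⊢
    exact hmemT _ hi (c.get_mem _)
  have hJKB : J ⊆ KB := by
    intro i hi
    simp only [hJ, hKB, Finset.mem_filter, Finset.mem_univ, true_and] at hi ⊢
    have hA1 : c.get (ws i) ∈ A := hmemS _ hi (c.get_mem _)
    have hadj := hwadj i
    rcases hbip _ _ hadj with ⟨_, hT2⟩ | ⟨hiT, _⟩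
    · exact absurd hT2 (hST _ (hAS _ hA1))
    · rcases hmemc _ (c.get_mem i) with h | h
      · exact absurd (hAS _ h) (hTS _ hiT)
      · exact h
  have hIJKB : (I ∪ J).card ≤ KB.card := Finset.card_le_card (Finset.union_subset hIKB hJKB)
  have hiu := Finset.card_inter_add_card_union I J
  have hinter : (I ∩ J).Nonempty := by
    rw [← Finset.card_pos]
    omega
  obtain ⟨i, hi⟩ := hinter
  have hxi : G.Adj x (c.get i) := by
    have hm := Finset.mem_inter.1 hi
    simpa [hI] using hm.1
  have hyi : G.Adj y (c.get (ws i)) := by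
    have hm := Finset.mem_inter.1 hi
    simpa [hJ] using hm.2
  -- build the Hamiltonian path
  have hcovc : ∀ v, v ∈ c ↔ (v ≠ x ∧ v ≠ y) := by
    intro v
    constructor
    · intro hv
      exact ⟨fun hc => hxc (hc ▸ hv), fun hc => hyc (hc ▸ hv)⟩
    · rintro ⟨hvx, hvy⟩
      apply hmemc'
      rcases hSorT v with h | h
      · exact Or.inl (Finset.mem_erase.2 ⟨hvx, (hSf v).2 h⟩)
      · exact Or.inr (Finset.mem_erase.2 ⟨hvy, (hTf v).2 h⟩)
  by_cases hcase : (i : ℕ) + 1 < L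
  · -- rotate the cycle
    set d : List V := c.drop ((i : ℕ) + 1) ++ c.take ((i : ℕ) + 1) with hd
    have htakene : c.take ((i : ℕ) + 1) ≠ [] :=
      List.ne_nil_of_length_pos (by rw [List.length_take]; omega)
    have hdchain : d.Chain' G.Adj := by
      rw [hd, List.Chain', List.isChain_append]
      refine ⟨hcchain.drop _, hcchain.take _, ?_⟩
      intro a ha b hb
      rw [drop_getLast? c ((i : ℕ) + 1) hcase] at ha
      rw [head?_eq_get _ (by rw [List.length_take]; omega)] at hb
      simp only [Option.mem_def, Option.some.injEq] at ha hb
      subst ha; subst hb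
      simp only [List.get_eq_getElem, List.getElem_take]
      exact hwrap'
    have hdperm : d.Perm c := by
      have p1 : d.Perm (c.take ((i : ℕ) + 1) ++ c.drop ((i : ℕ) + 1)) := List.perm_append_comm
      rwa [List.take_append_drop] at p1
    have hdnodup : d.Nodup := hdperm.nodup_iff.2 hcnodup
    have hdcov : ∀ v, v ∈ d ↔ (v ≠ x ∧ v ≠ y) := by
      intro v; rw [hdperm.mem_iff]; exact hcovc v
    have hdhead : d.head? = some (c.get ⟨(i : ℕ) + 1, hcase⟩) := by
      rw [hd, List.head?_append_of_ne_nil _ (List.ne_nil_of_length_pos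
        (by rw [List.length_drop]; omega)), drop_head? c ((i : ℕ) + 1) hcase]
    have hdlast : d.getLast? = some (c.get i) := by
      rw [hd, List.getLast?_append_of_ne_nil _ htakene, take_getLast? c (i : ℕ) (by omega)]
    have hws_eq : ws i = ⟨(i : ℕ) + 1, hcase⟩ := by simp only [hwsdef]; exact dif_pos hcase
    refine ham_of_cycle_segment G x y hxy d hdchain hdnodup hdcov
      (c.get i) (c.get ⟨(i : ℕ) + 1, hcase⟩) hdhead hdlast hxi ?_
    rw [← hws_eq]
    exact hyi
  · -- the crossing is at the wrap-around edge : use the cycle as-is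
    have hieq : (i : ℕ) = L - 1 := by omega
    have hdlast : c.getLast? = some (c.get i) := by
      rw [List.getLast?_eq_getLast hcne]
      congr 1
      rw [← hlastL]
      congr 1
      exact (Fin.ext (by first | omega | (simp only [Fin.val_mk]; omega))).symm
    have hdhead : c.head? = some (c.get ⟨0, hL⟩) := head?_eq_get _ hL
    have hws_eq : ws i = ⟨0, hL⟩ := by simp only [hwsdef]; exact dif_neg hcase
    refine ham_of_cycle_segment G x y hxy c hcchain hcnodup hcovc
      (c.get i) (c.get ⟨0, hL⟩) hdhead hdlast hxi ?_
    rw [← hws_eq]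
    exact hyi
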